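/- Let S* ⊆ (0, ∞) be open and additive, let S = [0, ∞) \ S*. If s* ∈ S* and s is a boundary point of S (equivalently of S*) with s > 0, then s + s* ∈ S*. -/
import Mathlib

theorem boundary_add_mem (Sstar : Set ℝ) (hsub : Sstar ⊆ Set.Ioi 0)
    (hopen : IsOpen Sstar) (hadd : ∀ a ∈ Sstar, ∀ b ∈ Sstar, a + b ∈ Sstar)
    (sstar : ℝ) (hsstar : sstar ∈ Sstar) (s : ℝ) (hs : s > 0)
    (hbd : s ∈ frontier (Set.Ici (0 : ℝ) \ Sstar)) :
    s + sstar ∈ Sstar := by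
  obtain ⟨ε, hε, hball⟩ := Metric.isOpen_iff.mp hopen sstar hsstar
  have hcl : s ∈ closure ((Set.Ici (0 : ℝ) \ Sstar)ᶜ) := by
    rw [closure_compl]
    exact hbd.2
  have hne := Metric.mem_closure_iff.mp hcl (min ε s) (lt_min hε hs)
  obtain ⟨x, hx, hdx⟩ := hne
  have hxd : |s - x| < ε := by
    rw [Real.dist_eq] at hdx
    exact lt_of_lt_of_le hdx (min_le_left _ _)
  have hxpos : x > 0 := by
    rw [Real.dist_eq] at hdx
    have h2 : |s - x| < s := lt_of_lt_of_le hdx (min_le_right _ _)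
    have := abs_lt.mp h2
    linarith [this.2]
  have hxS : x ∈ Sstar := by
    rcases (Set.mem_compl_iff _ _).mp hx |> fun h => h with h
    by_contra hxs
    exact h ⟨le_of_lt hxpos, hxs⟩
  have hy : sstar + (s - x) ∈ Sstar := by
    apply hball
    rw [Metric.mem_ball, Real.dist_eq]
    simpa using hxd
  have := hadd x hxS _ hy
  have heq : x + (sstar + (s - x)) = s + sstar := by ring
  rwa [heq] at this
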